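/- Define f₂ : {0,1} → {0,1} by f₂(x₁) = x₁ and f : {0,1}² → {0,1} by f(x₂, x₃) = x₂·x₃ + (1 − x₂)·(1 − x₃). Fix arbitrary a₁, a₃ ∈ {0,1} (the individual's exogenous values of X₁ and X₃). Then: (i) the map b ↦ f(f₂(a₁), b), which is the potential outcome of Y under do(X₃ = b), is not constant (so X₃ is an individual cause of Y); (ii) the potential value of X₃ under any intervention on (X₁, X₂) equals a₃, so all nested counterfactuals Y_{(X₃)_u} coincide and the root condition holds for X₃ — hence X₃ is a root cause of Y; (iii) the map (b₂, b₃) ↦ f(b₂, b₃) is not constant (so the set (X₂, X₃) is an individual cause of Y); (iv) f(f₂(1), a₃) ≠ f(f₂(0), a₃), i.e., the nested counterfactual Y_{(X₂,X₃)_{X₁=c}} depends on c, so the root condition fails for (X₂, X₃). Consequently, the root-cause property is not monotone under taking supersets of the candidate variable set. -/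
import Mathlib

/-- counterexample in the proof of Property 2(a): structural equations
`X₂ = f₂(X₁) = X₁`, `Y = f(X₂, X₃) = X₂X₃ + (1−X₂)(1−X₃)`, with `X₁, X₃` exogenous taking
values `a₁, a₃`. Then `X₃` is a root cause of `Y` ((i) and (ii)), while the superset
`(X₂, X₃)` is an individual cause ((iii)) failing the root condition ((iv)); hence the
root-cause property is not monotone under supersets. -/
theorem stmt10 (a₁ a₃ : Fin 2)
    (f₂ : Fin 2 → Fin 2) (hf₂ : ∀ x₁, f₂ x₁ = x₁)
    (f : Fin 2 → Fin 2 → Fin 2) (hf : ∀ x₂ x₃, f x₂ x₃ = x₂ * x₃ + (1 - x₂) * (1 - x₃))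
    (X3po : Fin 2 × Fin 2 → Fin 2) (hX3 : ∀ u, X3po u = a₃) :
    -- (i) X₃ is an individual cause of Y
    (∃ b b' : Fin 2, f (f₂ a₁) b ≠ f (f₂ a₁) b') ∧
    -- (ii) the nested counterfactuals Y_{(X₃)_u} coincide: the root condition holds for X₃
    (∀ u u' : Fin 2 × Fin 2, f (f₂ a₁) (X3po u) = f (f₂ a₁) (X3po u')) ∧
    -- (iii) the set (X₂, X₃) is an individual cause of Y
    (∃ q q' : Fin 2 × Fin 2, f q.1 q.2 ≠ f q'.1 q'.2) ∧
    -- (iv) the root condition fails for (X₂, X₃)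
    (f (f₂ 1) a₃ ≠ f (f₂ 0) a₃) := by
  refine ⟨⟨0, 1, ?_⟩, fun u u' => by rw [hX3 u, hX3 u'], ⟨(0,0), (0,1), ?_⟩, ?_⟩
  · simp [hf, hf₂]; fin_cases a₁ <;> decide
  · simp [hf]
  · simp [hf, hf₂]; fin_cases a₃ <;> decide
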